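/- arXiv:2601.09737 — 7 statements merged into one kernel-verified Lean document; each statement's English description precedes it below -/
import Mathlib

section
/- Let H_{N-1} = Σ_{j=1}^{N-1} 1/(N-j) denote the (N-1)-th harmonic number. Then the limit as r → +∞ of the expression ρ(r) = ((r^{N-1}+⋯+r+1)/(r^{N-2}+⋯+r+1)) · ((N-1)/(r+N-1)) · Σ_{j=1}^{N-1} ((rj+N-j)/(rj(N-j))) · ((r^N - r^j)/(r^N - 1)) equals (N-1)·H_{N-1}. -/
open Finset Filter Topology

private lemma sum_zero_pow' (n : ℕ) (hn : 1 ≤ n) : ∑ m ∈ range n, (0:ℝ) ^ m = 1 := by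
  rw [Finset.sum_eq_single_of_mem 0 (Finset.mem_range.mpr (by omega))]
  · simp
  · intro b _ hb; simp [zero_pow hb]

private lemma sum_pow_reflect' (r : ℝ) (hr : r ≠ 0) (n : ℕ) :
    ∑ k ∈ range n, r ^ k = r ^ (n - 1) * ∑ m ∈ range n, (r⁻¹) ^ m := by
  rw [Finset.mul_sum, ← Finset.sum_range_reflect (fun k => r ^ k) n]
  refine Finset.sum_congr rfl fun m hm => ?_
  have hm' : m ≤ n - 1 := by have := Finset.mem_range.mp hm; omega
  rw [pow_sub₀ r hr hm', inv_pow]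

/-- The critical absorption-time rate for Bernoulli proliferation on the
complete graph `K_N` tends to `(N-1) H_{N-1}` as `r → +∞`. -/
theorem critical_absorption_rate_limit_complete (N : ℕ) (hN : 2 ≤ N) :
    Tendsto
      (fun r : ℝ =>
        ((∑ k ∈ range N, r ^ k) / (∑ k ∈ range (N - 1), r ^ k)) *
          ((N - 1 : ℝ) / (r + N - 1)) *
          ∑ j ∈ Icc 1 (N - 1),
            ((r * j + N - j) / (r * j * (N - j))) *
              ((r ^ N - r ^ j) / (r ^ N - 1)))
      atTop
      (nhds ((N - 1 : ℝ) * ∑ j ∈ Icc 1 (N - 1), 1 / (N - j : ℝ))) := by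
  have hN1 : 1 ≤ N - 1 := by omega
  have hNj0 : ∀ j ∈ Icc 1 (N - 1), ((N : ℝ) - j) ≠ 0 := by
    intro j hj
    obtain ⟨h1, h2⟩ := Finset.mem_Icc.mp hj
    have : (j : ℝ) < N := by exact_mod_cast (by omega : j < N)
    linarith
  have hj0 : ∀ j ∈ Icc 1 (N - 1), (j : ℝ) ≠ 0 := by
    intro j hj
    obtain ⟨h1, _⟩ := Finset.mem_Icc.mp hj
    exact Nat.cast_ne_zero.mpr (by omega)
  have hinv : Tendsto (fun r : ℝ => r⁻¹) atTop (𝓝 0) := tendsto_inv_atTop_zero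
  -- limiting function in terms of t = r⁻¹
  have key : Tendsto
      (fun r : ℝ =>
        ((∑ m ∈ range N, (r⁻¹) ^ m) / (∑ m ∈ range (N - 1), (r⁻¹) ^ m)) *
          ((N - 1 : ℝ) / (1 + ((N : ℝ) - 1) * r⁻¹)) *
          ∑ j ∈ Icc 1 (N - 1),
            (((j : ℝ) + ((N : ℝ) - j) * r⁻¹) / (j * ((N : ℝ) - j))) *
              ((1 - (r⁻¹) ^ (N - j)) / (1 - (r⁻¹) ^ N)))
      atTop
      (𝓝 ((N - 1 : ℝ) * ∑ j ∈ Icc 1 (N - 1), 1 / (N - j : ℝ))) := by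
    have hSN : Tendsto (fun r : ℝ => ∑ m ∈ range N, (r⁻¹) ^ m) atTop (𝓝 1) := by
      have := tendsto_finset_sum (range N) (fun i _ => hinv.pow i)
      rwa [sum_zero_pow' N (by omega)] at this
    have hSN1 : Tendsto (fun r : ℝ => ∑ m ∈ range (N - 1), (r⁻¹) ^ m) atTop (𝓝 1) := by
      have := tendsto_finset_sum (range (N - 1)) (fun i _ => hinv.pow i)
      rwa [sum_zero_pow' (N - 1) hN1] at this
    have hF1 : Tendsto (fun r : ℝ =>
        ((∑ m ∈ range N, (r⁻¹) ^ m) / (∑ m ∈ range (N - 1), (r⁻¹) ^ m)) *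
          ((N - 1 : ℝ) / (1 + ((N : ℝ) - 1) * r⁻¹))) atTop (𝓝 ((N : ℝ) - 1)) := by
      have h1 : Tendsto (fun r : ℝ =>
          (∑ m ∈ range N, (r⁻¹) ^ m) / (∑ m ∈ range (N - 1), (r⁻¹) ^ m)) atTop (𝓝 1) := by
        have := hSN.div hSN1 (by norm_num)
        simpa only [div_one, Pi.div_def] using this
      have h2 : Tendsto (fun r : ℝ => (N - 1 : ℝ) / (1 + ((N : ℝ) - 1) * r⁻¹)) atTop
          (𝓝 ((N : ℝ) - 1)) := by
        have hden : Tendsto (fun r : ℝ => 1 + ((N : ℝ) - 1) * r⁻¹) atTop (𝓝 1) := by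
          have := (tendsto_const_nhds (x := ((N : ℝ) - 1))).mul hinv
          have h' := (tendsto_const_nhds (x := (1 : ℝ))).add this
          simpa using h'
        have := (tendsto_const_nhds (x := ((N : ℝ) - 1)) (f := atTop)).div hden (by norm_num)
        simpa only [div_one, Pi.div_def] using this
      have := h1.mul h2
      simpa using this
    have hF2 : Tendsto (fun r : ℝ =>
        ∑ j ∈ Icc 1 (N - 1),
          (((j : ℝ) + ((N : ℝ) - j) * r⁻¹) / (j * ((N : ℝ) - j))) *
            ((1 - (r⁻¹) ^ (N - j)) / (1 - (r⁻¹) ^ N))) atTop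
        (𝓝 (∑ j ∈ Icc 1 (N - 1), 1 / ((N : ℝ) - j))) := by
      refine tendsto_finset_sum _ fun j hj => ?_
      obtain ⟨hj1, hj2⟩ := Finset.mem_Icc.mp hj
      have hA : Tendsto (fun r : ℝ =>
          ((j : ℝ) + ((N : ℝ) - j) * r⁻¹) / (j * ((N : ℝ) - j))) atTop
          (𝓝 ((j : ℝ) / (j * ((N : ℝ) - j)))) := by
        have hnum : Tendsto (fun r : ℝ => (j : ℝ) + ((N : ℝ) - j) * r⁻¹) atTop (𝓝 (j : ℝ)) := by
          have := (tendsto_const_nhds (x := ((N : ℝ) - j))).mul hinv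
          have h' := (tendsto_const_nhds (x := ((j : ℝ)))).add this
          simpa using h'
        exact hnum.div tendsto_const_nhds (mul_ne_zero (hj0 j hj) (hNj0 j hj))
      have hB : Tendsto (fun r : ℝ =>
          (1 - (r⁻¹) ^ (N - j)) / (1 - (r⁻¹) ^ N)) atTop (𝓝 1) := by
        have hnum : Tendsto (fun r : ℝ => 1 - (r⁻¹) ^ (N - j)) atTop (𝓝 1) := by
          have := (tendsto_const_nhds (x := (1 : ℝ))).sub (hinv.pow (N - j))
          simpa [zero_pow (by omega : N - j ≠ 0)] using this
        have hden : Tendsto (fun r : ℝ => 1 - (r⁻¹) ^ N) atTop (𝓝 1) := by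
          have := (tendsto_const_nhds (x := (1 : ℝ))).sub (hinv.pow N)
          simpa [zero_pow (by omega : N ≠ 0)] using this
        have := hnum.div hden (by norm_num)
        simpa only [div_one, Pi.div_def] using this
      have := hA.mul hB
      have hval : (j : ℝ) / (j * ((N : ℝ) - j)) * 1 = 1 / ((N : ℝ) - j) := by
        rw [mul_one, div_eq_div_iff (mul_ne_zero (hj0 j hj) (hNj0 j hj)) (hNj0 j hj)]
        ring
      rwa [hval] at this
    have := hF1.mul hF2
    exact this
  -- now transfer along the eventual equality
  refine key.congr' ?_
  filter_upwards [eventually_gt_atTop (1 : ℝ)] with r hr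
  have hr0 : (0 : ℝ) < r := lt_trans one_pos hr
  have hrne : r ≠ 0 := ne_of_gt hr0
  have hrNne : r ^ N ≠ 0 := pow_ne_zero _ hrne
  have hrN1 : r ^ N - 1 ≠ 0 := by
    have : (1 : ℝ) < r ^ N := one_lt_pow₀ hr (by omega)
    linarith
  have hSpos : (0 : ℝ) < ∑ m ∈ range (N - 1), (r⁻¹) ^ m :=
    Finset.sum_pos (fun i _ => pow_pos (inv_pos.mpr hr0) i)
      (Finset.nonempty_range_iff.mpr (by omega))
  have hSne : (∑ m ∈ range (N - 1), (r⁻¹) ^ m) ≠ 0 := ne_of_gt hSpos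
  have hrN : (0 : ℝ) < r + N - 1 := by
    have : (2 : ℝ) ≤ N := by exact_mod_cast hN
    linarith
  have hrNne' : r + (N : ℝ) - 1 ≠ 0 := ne_of_gt hrN
  have hden2 : 1 + ((N : ℝ) - 1) * r⁻¹ ≠ 0 := by
    have h1 : (1 : ℝ) ≤ N := by exact_mod_cast (by omega : 1 ≤ N)
    have : 0 ≤ ((N : ℝ) - 1) * r⁻¹ := mul_nonneg (by linarith) (le_of_lt (inv_pos.mpr hr0))
    linarith
  -- first factor
  have hfac1 :
      ((∑ m ∈ range N, (r⁻¹) ^ m) / (∑ m ∈ range (N - 1), (r⁻¹) ^ m)) *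
        ((N - 1 : ℝ) / (1 + ((N : ℝ) - 1) * r⁻¹)) =
      ((∑ k ∈ range N, r ^ k) / (∑ k ∈ range (N - 1), r ^ k)) *
        ((N - 1 : ℝ) / (r + N - 1)) := by
    rw [sum_pow_reflect' r hrne N, sum_pow_reflect' r hrne (N - 1)]
    have hpow : r ^ (N - 1) = r ^ (N - 1 - 1) * r := by
      rw [← pow_succ]; congr 1; omega
    rw [hpow]
    have hpne : r ^ (N - 1 - 1) ≠ 0 := pow_ne_zero _ hrne
    rw [mul_assoc, mul_div_mul_left _ _ hpne, mul_div_assoc]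
    have hsc : (N - 1 : ℝ) / (1 + ((N : ℝ) - 1) * r⁻¹) = r * (((N : ℝ) - 1) / (r + N - 1)) := by
      rw [← mul_div_assoc, div_eq_div_iff hden2 hrNne']
      field_simp [hrne]
      ring
    rw [hsc]
    ring
  -- the sum
  have hfac2 :
      (∑ j ∈ Icc 1 (N - 1),
        (((j : ℝ) + ((N : ℝ) - j) * r⁻¹) / (j * ((N : ℝ) - j))) *
          ((1 - (r⁻¹) ^ (N - j)) / (1 - (r⁻¹) ^ N))) =
      ∑ j ∈ Icc 1 (N - 1),
        ((r * j + N - j) / (r * j * (N - j))) *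
          ((r ^ N - r ^ j) / (r ^ N - 1)) := by
    refine Finset.sum_congr rfl fun j hj => ?_
    obtain ⟨hj1, hj2⟩ := Finset.mem_Icc.mp hj
    have hjN : j ≤ N := by omega
    have e1 : (r⁻¹) ^ (N - j) = r ^ j / r ^ N := by
      rw [inv_pow, pow_sub₀ r hrne hjN, mul_inv, inv_inv, mul_comm, div_eq_mul_inv]
    have e2 : (r⁻¹) ^ N = 1 / r ^ N := by rw [inv_pow, one_div]
    have hB : (1 - (r⁻¹) ^ (N - j)) / (1 - (r⁻¹) ^ N) = (r ^ N - r ^ j) / (r ^ N - 1) := by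
      rw [e1, e2, one_sub_div hrNne, one_sub_div hrNne, div_div_div_cancel_right₀ hrNne]
    have hA : ((j : ℝ) + ((N : ℝ) - j) * r⁻¹) / (j * ((N : ℝ) - j)) =
        (r * j + N - j) / (r * j * (N - j)) := by
      rw [div_eq_div_iff (mul_ne_zero (hj0 j hj) (hNj0 j hj))
        (by exact mul_ne_zero (mul_ne_zero hrne (hj0 j hj)) (hNj0 j hj))]
      field_simp
      ring
    rw [hA, hB]
  rw [hfac1, hfac2]
end

section
/- For the Moran process on K_N at neutral drift r = 1 and critical parameter, the critical fixation time rate equals N - 1: that is, lim_{r→1} P(r,p_c) = N-1, where P(r,p_c) = ((r^{N-1}+⋯+1)/(r^{N-2}+⋯+1))·((N-1)/(r+N-1))·Σ_{j=1}^{N-1} ((r^N(r^j-1))/(r^j(r^N-1)))·((rj+N-j)/(rj(N-j)))·((r^N - r^j)/(r^N - r^{N-1})). -/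
open Finset Filter

/-- As `r → 1`, the critical fixation time rate for Bernoulli proliferation
on the complete graph `K_N` tends to `N - 1`. -/
theorem critical_fixation_rate_at_one_complete (N : ℕ) (hN : 2 ≤ N) :
    Tendsto
      (fun r : ℝ =>
        ((∑ k ∈ range N, r ^ k) / (∑ k ∈ range (N - 1), r ^ k)) *
          ((N - 1 : ℝ) / (r + N - 1)) *
          ∑ j ∈ Icc 1 (N - 1),
            (r ^ N * (r ^ j - 1) / (r ^ j * (r ^ N - 1))) *
              ((r * j + N - j) / (r * j * (N - j))) *
              ((r ^ N - r ^ j) / (r ^ N - r ^ (N - 1))))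
      (nhdsWithin 1 {(1 : ℝ)}ᶜ)
      (nhds ((N : ℝ) - 1)) := by
  have hN2 : (2 : ℝ) ≤ (N : ℝ) := by exact_mod_cast hN
  have hN0 : (N : ℝ) ≠ 0 := by linarith
  have hN1 : (N : ℝ) - 1 ≠ 0 := by linarith
  have hcast : ((N - 1 : ℕ) : ℝ) = (N : ℝ) - 1 := by
    push_cast [Nat.cast_sub (by omega : 1 ≤ N)]; ring
  -- geometric sums
  have hS1 : ∀ m : ℕ, (∑ k ∈ range m, (1:ℝ) ^ k) = (m : ℝ) := by intro m; simp
  have hStend : ∀ m : ℕ, Tendsto (fun r : ℝ => ∑ k ∈ range m, r ^ k)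
      (nhds (1 : ℝ)) (nhds (m : ℝ)) := by
    intro m
    have hc : Continuous (fun r : ℝ => ∑ k ∈ range m, r ^ k) :=
      continuous_finset_sum _ fun k _ => continuous_pow k
    have := hc.tendsto 1
    rwa [hS1 m] at this
  -- the regularized function
  set g : ℝ → ℝ := fun r =>
    ((∑ k ∈ range N, r ^ k) / (∑ k ∈ range (N - 1), r ^ k)) *
      ((N - 1 : ℝ) / (r + N - 1)) *
      ∑ j ∈ Icc 1 (N - 1),
        (r ^ N * (∑ k ∈ range j, r ^ k) / (r ^ j * ∑ k ∈ range N, r ^ k)) *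
          ((r * j + N - j) / (r * j * (N - j))) *
          ((r ^ j * ∑ k ∈ range (N - j), r ^ k) / r ^ (N - 1)) with hgdef
  -- limit of the sum part of g
  have hsum : Tendsto
      (fun r : ℝ => ∑ j ∈ Icc 1 (N - 1),
        (r ^ N * (∑ k ∈ range j, r ^ k) / (r ^ j * ∑ k ∈ range N, r ^ k)) *
          ((r * j + N - j) / (r * j * (N - j))) *
          ((r ^ j * ∑ k ∈ range (N - j), r ^ k) / r ^ (N - 1)))
      (nhds 1) (nhds ((N : ℝ) - 1)) := by
    have htt : Tendsto
      (fun r : ℝ => ∑ j ∈ Icc 1 (N - 1),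
        (r ^ N * (∑ k ∈ range j, r ^ k) / (r ^ j * ∑ k ∈ range N, r ^ k)) *
          ((r * j + N - j) / (r * j * (N - j))) *
          ((r ^ j * ∑ k ∈ range (N - j), r ^ k) / r ^ (N - 1)))
      (nhds 1) (nhds (∑ j ∈ Icc 1 (N - 1), (1 : ℝ))) := by
      refine tendsto_finset_sum _ fun j hj => ?_
      simp only [mem_Icc] at hj
      have hj0 : (j : ℝ) ≠ 0 := Nat.cast_ne_zero.mpr (by omega)
      have hjle : (j : ℝ) ≤ (N : ℝ) - 1 := by
        have h : (j:ℝ) ≤ ((N - 1 : ℕ) : ℝ) := Nat.cast_le.mpr hj.2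
        rwa [hcast] at h
      have hjN : (N : ℝ) - (j : ℝ) ≠ 0 := by linarith
      have hNj : ((N - j : ℕ) : ℝ) = (N : ℝ) - (j : ℝ) :=
        Nat.cast_sub (by omega)
      have h1 : Tendsto
          (fun r : ℝ => r ^ N * (∑ k ∈ range j, r ^ k) / (r ^ j * ∑ k ∈ range N, r ^ k))
          (nhds 1) (nhds ((j : ℝ) / (N : ℝ))) := by
        have h := (((continuous_pow N).tendsto (1:ℝ)).mul (hStend j)).div
          (((continuous_pow j).tendsto (1:ℝ)).mul (hStend N)) (by simp [hN0])
        convert h using 2 <;> simp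
      have h2 : Tendsto
          (fun r : ℝ => (r * j + N - j) / (r * j * (N - j))) (nhds 1)
          (nhds (((1:ℝ) * j + N - j) / ((1:ℝ) * j * (N - j)))) := by
        have hnum : Continuous (fun r : ℝ => r * (j:ℝ) + (N:ℝ) - (j:ℝ)) := by continuity
        have hden : Continuous (fun r : ℝ => r * (j:ℝ) * ((N:ℝ) - (j:ℝ))) := by continuity
        exact (hnum.tendsto 1).div (hden.tendsto 1)
          (by simp only [one_mul]; exact mul_ne_zero hj0 hjN)
      have h3 : Tendsto
          (fun r : ℝ => (r ^ j * ∑ k ∈ range (N - j), r ^ k) / r ^ (N - 1))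
          (nhds 1) (nhds ((N : ℝ) - (j:ℝ))) := by
        have h := (((continuous_pow j).tendsto (1:ℝ)).mul (hStend (N - j))).div
          ((continuous_pow (N-1)).tendsto (1:ℝ)) (by simp)
        convert h using 2 <;> simp [hNj]
      have h := (h1.mul h2).mul h3
      have hval : (j : ℝ) / (N : ℝ) * (((1:ℝ) * j + N - j) / ((1:ℝ) * j * (N - j))) *
          ((N : ℝ) - (j:ℝ)) = 1 := by
        field_simp
        ring
      rwa [hval] at h
    have hcard : (∑ j ∈ Icc 1 (N - 1), (1 : ℝ)) = (N : ℝ) - 1 := by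
      rw [sum_const, Nat.card_Icc]
      simp only [nsmul_eq_mul, mul_one]
      rw [show N - 1 + 1 - 1 = N - 1 from by omega, hcast]
    rwa [hcard] at htt
  -- limit of the prefactor
  have hpre : Tendsto
      (fun r : ℝ => ((∑ k ∈ range N, r ^ k) / (∑ k ∈ range (N - 1), r ^ k)) *
        ((N - 1 : ℝ) / (r + N - 1)))
      (nhds 1) (nhds 1) := by
    have hA := (hStend N).div (hStend (N - 1)) (by rw [hcast]; exact hN1)
    have hB : Tendsto (fun r : ℝ => (N - 1 : ℝ) / (r + N - 1)) (nhds 1)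
        (nhds (((N:ℝ) - 1) / ((1:ℝ) + N - 1))) := by
      have hden : Continuous (fun r : ℝ => r + (N:ℝ) - 1) := by continuity
      exact tendsto_const_nhds.div (hden.tendsto 1) (by simp; linarith)
    have h := hA.mul hB
    rw [hcast] at h
    have hval : (N:ℝ) / ((N:ℝ) - 1) * (((N:ℝ) - 1) / ((1:ℝ) + N - 1)) = 1 := by
      have : (1:ℝ) + N - 1 = N := by ring
      rw [this]
      field_simp
    rwa [hval] at h
  have hg : Tendsto g (nhds 1) (nhds ((N : ℝ) - 1)) := by
    have h := hpre.mul hsum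
    rw [one_mul] at h
    exact h
  -- transfer via eventual equality on the punctured neighborhood
  refine (hg.mono_left nhdsWithin_le_nhds).congr' ?_
  have hmem : ∀ᶠ r in nhdsWithin (1:ℝ) {(1:ℝ)}ᶜ, r ∈ ({(1:ℝ)}ᶜ : Set ℝ) :=
    eventually_mem_nhdsWithin
  have hpos : ∀ᶠ r in nhdsWithin (1:ℝ) {(1:ℝ)}ᶜ, (0:ℝ) < r :=
    eventually_nhdsWithin_of_eventually_nhds (eventually_gt_nhds one_pos)
  filter_upwards [hmem, hpos] with r hr1 hr0
  have hr1' : r ≠ 1 := hr1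
  have hrsub : r - 1 ≠ 0 := sub_ne_zero.mpr hr1'
  have hr0' : r ≠ 0 := ne_of_gt hr0
  have hSN : (∑ k ∈ range N, r ^ k) ≠ 0 := by
    have : (0:ℝ) < ∑ k ∈ range N, r ^ k :=
      Finset.sum_pos (fun k _ => pow_pos hr0 k) (nonempty_range_iff.mpr (by omega))
    exact ne_of_gt this
  have hgeom : ∀ m : ℕ, r ^ m - 1 = (∑ k ∈ range m, r ^ k) * (r - 1) :=
    fun m => (geom_sum_mul r m).symm
  -- pointwise equality g r = f r
  simp only [hgdef]
  congr 1
  refine sum_congr rfl fun j hj => ?_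
  simp only [mem_Icc] at hj
  have hjN : j ≤ N := by omega
  have hpowsplit : r ^ N - r ^ j = r ^ j * ((∑ k ∈ range (N - j), r ^ k) * (r - 1)) := by
    rw [← hgeom, mul_sub, mul_one, ← pow_add]
    congr 2
    omega
  have hpow1 : r ^ N - r ^ (N - 1) = r ^ (N - 1) * (r - 1) := by
    have h : r ^ N = r ^ (N - 1) * r := by
      rw [← pow_succ]
      congr 1
      omega
    rw [h]; ring
  rw [hgeom j, hgeom N, hpowsplit, hpow1]
  congr 1
  · congr 1
    rw [div_eq_div_iff (mul_ne_zero (pow_ne_zero _ hr0') hSN)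
      (mul_ne_zero (pow_ne_zero _ hr0') (mul_ne_zero hSN hrsub))]
    ring
  · rw [div_eq_div_iff (pow_ne_zero _ hr0') (mul_ne_zero (pow_ne_zero _ hr0') hrsub)]
    ring
end

section
/- The limit as r → +∞ of the critical fixation time rate for Bernoulli proliferation on K_N equals (N-1)·H_{N-1}: lim_{r→∞} ((r^{N-1}+⋯+1)/(r^{N-2}+⋯+1))·((N-1)/(r+N-1))·Σ_{j=1}^{N-1} ((r^N(r^j-1))/(r^j(r^N-1)))·((rj+N-j)/(rj(N-j)))·((r^N - r^j)/(r^N - r^{N-1})) = (N-1)·Σ_{k=1}^{N-1} 1/k. -/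
open Finset Filter

set_option maxHeartbeats 1000000

/-- As `r → +∞`, the critical fixation time rate for Bernoulli proliferation
on the complete graph `K_N` tends to `(N-1) H_{N-1}`. -/
theorem critical_fixation_rate_limit_complete (N : ℕ) (hN : 2 ≤ N) :
    Tendsto
      (fun r : ℝ =>
        ((∑ k ∈ range N, r ^ k) / (∑ k ∈ range (N - 1), r ^ k)) *
          ((N - 1 : ℝ) / (r + N - 1)) *
          ∑ j ∈ Icc 1 (N - 1),
            (r ^ N * (r ^ j - 1) / (r ^ j * (r ^ N - 1))) *
              ((r * j + N - j) / (r * j * (N - j))) *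
              ((r ^ N - r ^ j) / (r ^ N - r ^ (N - 1))))
      atTop
      (nhds ((N - 1 : ℝ) * ∑ k ∈ Icc 1 (N - 1), 1 / (k : ℝ))) := by
  obtain ⟨M, rfl⟩ : ∃ M, N = M + 1 := ⟨N - 1, by omega⟩
  have hM : 1 ≤ M := by omega
  simp only [Nat.add_sub_cancel]
  -- basic limits
  have hinv : Tendsto (fun r : ℝ => r⁻¹) atTop (nhds 0) := tendsto_inv_atTop_zero
  have h1 : ∀ m : ℕ, m ≠ 0 → Tendsto (fun r : ℝ => 1 - (r ^ m)⁻¹) atTop (nhds 1) := by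
    intro m hm
    have hp : Tendsto (fun x : ℝ => x ^ m) atTop atTop := tendsto_pow_atTop hm
    have h : Tendsto (fun x : ℝ => (x ^ m)⁻¹) atTop (nhds 0) := hp.inv_tendsto_atTop
    simpa using tendsto_const_nhds.sub h
  -- the simplified function
  set g : ℝ → ℝ := fun r =>
    ((M : ℝ) * ((1 - (r ^ (M + 1))⁻¹) / ((1 - (r ^ M)⁻¹) * (1 + (M : ℝ) * r⁻¹)))) *
      ∑ j ∈ Icc 1 M,
        ((1 - (r ^ j)⁻¹) / (1 - (r ^ (M + 1))⁻¹)) *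
          (((j : ℝ) + (((M : ℝ) + 1) - j) * r⁻¹) / ((j : ℝ) * (((M : ℝ) + 1) - j))) *
          ((1 - (r ^ (M + 1 - j))⁻¹) / (1 - r⁻¹)) with hg
  have hA : Tendsto (fun r : ℝ =>
      (M : ℝ) * ((1 - (r ^ (M + 1))⁻¹) / ((1 - (r ^ M)⁻¹) * (1 + (M : ℝ) * r⁻¹))))
      atTop (nhds (M : ℝ)) := by
    have hadd : Tendsto (fun r : ℝ => 1 + (M : ℝ) * r⁻¹) atTop (nhds 1) := by
      simpa using tendsto_const_nhds.add ((tendsto_const_nhds (x := (M : ℝ))).mul hinv)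
    have := (tendsto_const_nhds (x := (M : ℝ))).mul
      ((h1 (M + 1) (by omega)).div ((h1 M (by omega)).mul hadd) (by norm_num))
    simpa using this
  have hS : Tendsto (fun r : ℝ =>
      ∑ j ∈ Icc 1 M,
        ((1 - (r ^ j)⁻¹) / (1 - (r ^ (M + 1))⁻¹)) *
          (((j : ℝ) + (((M : ℝ) + 1) - j) * r⁻¹) / ((j : ℝ) * (((M : ℝ) + 1) - j))) *
          ((1 - (r ^ (M + 1 - j))⁻¹) / (1 - r⁻¹)))
      atTop (nhds (∑ j ∈ Icc 1 M, 1 / (((M : ℝ) + 1) - j))) := by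
    refine tendsto_finset_sum _ (fun j hj => ?_)
    simp only [mem_Icc] at hj
    have hj0 : (j : ℝ) ≠ 0 := by
      exact_mod_cast Nat.one_le_iff_ne_zero.mp hj.1
    have hcpos : (0 : ℝ) < ((M : ℝ) + 1) - j := by
      have : (j : ℝ) ≤ M := by exact_mod_cast hj.2
      linarith
    have hc : ((M : ℝ) + 1) - j ≠ 0 := ne_of_gt hcpos
    have hP1 : Tendsto (fun r : ℝ => (1 - (r ^ j)⁻¹) / (1 - (r ^ (M + 1))⁻¹))
        atTop (nhds 1) := by
      have h := (h1 j (by omega)).div (h1 (M + 1) (by omega)) one_ne_zero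
      rw [div_one] at h; exact h
    have hP2 : Tendsto (fun r : ℝ =>
        ((j : ℝ) + (((M : ℝ) + 1) - j) * r⁻¹) / ((j : ℝ) * (((M : ℝ) + 1) - j)))
        atTop (nhds (1 / (((M : ℝ) + 1) - j))) := by
      have hnum : Tendsto (fun r : ℝ => (j : ℝ) + (((M : ℝ) + 1) - j) * r⁻¹)
          atTop (nhds (j : ℝ)) := by
        simpa using tendsto_const_nhds.add (tendsto_const_nhds.mul hinv)
      have := hnum.div (tendsto_const_nhds (x := (j : ℝ) * (((M : ℝ) + 1) - j)))
        (mul_ne_zero hj0 hc)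
      convert this using 2
      · rfl
      rw [eq_div_iff (mul_ne_zero hj0 hc), one_div, mul_comm (j : ℝ), ← mul_assoc,
        inv_mul_cancel₀ hc, one_mul]
    have hP3 : Tendsto (fun r : ℝ => (1 - (r ^ (M + 1 - j))⁻¹) / (1 - r⁻¹))
        atTop (nhds 1) := by
      have hden : Tendsto (fun r : ℝ => 1 - r⁻¹) atTop (nhds 1) := by
        simpa using tendsto_const_nhds.sub hinv
      have h := (h1 (M + 1 - j) (by omega)).div hden one_ne_zero
      rw [div_one] at h; exact h
    have := (hP1.mul hP2).mul hP3
    simpa using this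
  have hG : Tendsto g atTop (nhds ((M : ℝ) * ∑ j ∈ Icc 1 M, 1 / (((M : ℝ) + 1) - j))) :=
    hA.mul hS
  have hrefl : ∑ j ∈ Icc 1 M, 1 / (((M : ℝ) + 1) - j) = ∑ k ∈ Icc 1 M, 1 / (k : ℝ) := by
    refine Finset.sum_nbij' (fun j => M + 1 - j) (fun k => M + 1 - k) ?_ ?_ ?_ ?_ ?_
    · intro a ha; simp only [mem_Icc] at *; omega
    · intro a ha; simp only [mem_Icc] at *; omega
    · intro a ha; simp only [mem_Icc] at *; omega
    · intro a ha; simp only [mem_Icc] at *; omega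
    · intro a ha
      simp only [mem_Icc] at ha
      rw [Nat.cast_sub (by omega)]
      push_cast
      ring_nf
  rw [hrefl] at hG
  have hG' : Tendsto g atTop
      (nhds (((↑(M + 1) : ℝ) - 1) * ∑ k ∈ Icc 1 M, 1 / (k : ℝ))) := by
    convert hG using 2
    push_cast
    ring
  refine hG'.congr' ?_
  filter_upwards [eventually_gt_atTop (1 : ℝ)] with r hr
  have hr0 : (0 : ℝ) < r := lt_trans one_pos hr
  have hrne : r ≠ 0 := ne_of_gt hr0
  have hr1 : r ≠ 1 := ne_of_gt hr
  have hrinv : r⁻¹ < 1 := by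
    rw [inv_lt_one_iff₀]; right; exact hr
  have hpow_gt : ∀ m : ℕ, m ≠ 0 → 1 < r ^ m := fun m hm => one_lt_pow₀ hr hm
  have hpowinv : ∀ m : ℕ, m ≠ 0 → (r ^ m)⁻¹ < 1 := by
    intro m hm
    rw [inv_lt_one_iff₀]; right; exact hpow_gt m hm
  have hsubne : ∀ m : ℕ, m ≠ 0 → 1 - (r ^ m)⁻¹ ≠ 0 := fun m hm =>
    ne_of_gt (by linarith [hpowinv m hm])
  have hgeomne : ∀ m : ℕ, m ≠ 0 → r ^ m - 1 ≠ 0 := fun m hm =>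
    ne_of_gt (by linarith [hpow_gt m hm])
  -- rewrite the geometric sums
  rw [geom_sum_eq hr1, geom_sum_eq hr1]
  -- prefactor equality
  have hApre : ((r ^ (M + 1) - 1) / (r - 1)) / ((r ^ M - 1) / (r - 1)) *
      ((↑(M + 1) - 1 : ℝ) / (r + ↑(M + 1) - 1)) =
      (M : ℝ) * ((1 - (r ^ (M + 1))⁻¹) / ((1 - (r ^ M)⁻¹) * (1 + (M : ℝ) * r⁻¹))) := by
    have h2 : r - 1 ≠ 0 := sub_ne_zero.mpr hr1
    have h3 : r ^ M - 1 ≠ 0 := hgeomne M (by omega)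
    have h4 : r ^ (M + 1) - 1 ≠ 0 := hgeomne (M + 1) (by omega)
    have hM0 : (0 : ℝ) ≤ (M : ℝ) := Nat.cast_nonneg _
    have h5 : r + (M : ℝ) ≠ 0 := by linarith
    have h9 : r ^ M ≠ 0 := pow_ne_zero _ hrne
    have h10 : r ^ (M + 1) ≠ 0 := pow_ne_zero _ hrne
    have q1 : (1 : ℝ) - (r ^ (M + 1))⁻¹ = (r ^ (M + 1) - 1) / r ^ (M + 1) := by
      field_simp
    have q2 : (1 : ℝ) - (r ^ M)⁻¹ = (r ^ M - 1) / r ^ M := by field_simp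
    have q3 : (1 : ℝ) + (M : ℝ) * r⁻¹ = (r + M) / r := by field_simp
    push_cast
    rw [q1, q2, q3, show r + ((M : ℝ) + 1) - 1 = r + M from by ring]
    field_simp
    ring
  -- summand equality
  have hSum : ∀ j ∈ Icc 1 M,
      (r ^ (M + 1) * (r ^ j - 1) / (r ^ j * (r ^ (M + 1) - 1))) *
        ((r * j + ↑(M + 1) - j) / (r * j * (↑(M + 1) - j))) *
        ((r ^ (M + 1) - r ^ j) / (r ^ (M + 1) - r ^ M)) =
      ((1 - (r ^ j)⁻¹) / (1 - (r ^ (M + 1))⁻¹)) *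
        (((j : ℝ) + (((M : ℝ) + 1) - j) * r⁻¹) / ((j : ℝ) * (((M : ℝ) + 1) - j))) *
        ((1 - (r ^ (M + 1 - j))⁻¹) / (1 - r⁻¹)) := by
    intro j hj
    simp only [mem_Icc] at hj
    obtain ⟨l, hl⟩ : ∃ l, M = j + l := ⟨M - j, by omega⟩
    have hMj : M + 1 - j = l + 1 := by omega
    have hj0 : (j : ℝ) ≠ 0 := by exact_mod_cast Nat.one_le_iff_ne_zero.mp hj.1
    have hcpos : (0 : ℝ) < ((M : ℝ) + 1) - j := by
      have : (j : ℝ) ≤ M := by exact_mod_cast hj.2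
      linarith
    have hc : ((M : ℝ) + 1) - j ≠ 0 := ne_of_gt hcpos
    have hjne : r ^ j ≠ 0 := pow_ne_zero _ hrne
    have hlne : r ^ l ≠ 0 := pow_ne_zero _ hrne
    have h4 : r ^ (M + 1) - 1 ≠ 0 := hgeomne (M + 1) (by omega)
    have h7 : 1 - (r ^ (M + 1))⁻¹ ≠ 0 := hsubne (M + 1) (by omega)
    have h11 : 1 - r⁻¹ ≠ 0 := ne_of_gt (by linarith)
    have h12 : r ^ (M + 1) - r ^ M ≠ 0 := by
      have : r ^ M < r ^ (M + 1) := by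
        calc r ^ M = r ^ M * 1 := by ring
        _ < r ^ M * r := by
            apply mul_lt_mul_of_pos_left hr (by positivity)
        _ = r ^ (M + 1) := by rw [pow_succ]
      exact ne_of_gt (by linarith)
    have e1 : r ^ (M + 1) = r ^ j * r ^ l * r := by
      rw [hl, pow_add, pow_add, pow_one]
    have e2 : r ^ M = r ^ j * r ^ l := by rw [hl, pow_add]
    have e3 : r ^ (M + 1 - j) = r ^ l * r := by rw [hMj, pow_add, pow_one]
    have h4' : r ^ j * r ^ l * r - 1 ≠ 0 := by rw [← e1]; exact h4
    have h7' : 1 - (r ^ j * r ^ l * r)⁻¹ ≠ 0 := by rw [← e1]; exact h7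
    have h12' : r ^ j * r ^ l * r - r ^ j * r ^ l ≠ 0 := by
      rw [← e1, ← e2]; exact h12
    have hl1 : (l : ℝ) + 1 ≠ 0 := by positivity
    have hcast : ((M : ℝ) + 1) - j = (l : ℝ) + 1 := by
      rw [hl]; push_cast; ring
    have F1 : r ^ (M + 1) * (r ^ j - 1) / (r ^ j * (r ^ (M + 1) - 1)) =
        (1 - (r ^ j)⁻¹) / (1 - (r ^ (M + 1))⁻¹) := by
      have h10 : r ^ (M + 1) ≠ 0 := pow_ne_zero _ hrne
      field_simp
    have F2 : (r * j + (↑(M + 1) : ℝ) - j) / (r * j * ((↑(M + 1) : ℝ) - j)) =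
        ((j : ℝ) + (((M : ℝ) + 1) - j) * r⁻¹) / ((j : ℝ) * (((M : ℝ) + 1) - j)) := by
      push_cast
      rw [div_eq_div_iff (by positivity) (by positivity)]
      field_simp
      ring
    have F3 : (r ^ (M + 1) - r ^ j) / (r ^ (M + 1) - r ^ M) =
        (1 - (r ^ (M + 1 - j))⁻¹) / (1 - r⁻¹) := by
      rw [e1, e2, e3, div_eq_div_iff h12' h11]
      field_simp
    rw [F1, F2, F3]
  rw [Finset.sum_congr rfl hSum, hApre, hg]
end

section
/- For the cycle graph of order N at r = 1 and p_c = 1/2, the critical fixation time rate equals N(N+1)/((N-2)(N+3)). -/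
open Finset

lemma inner1 (n : ℕ) : (∑ j ∈ Icc 1 n, (j : ℝ)) = n * (n + 1) / 2 := by
  induction n with
  | zero => simp
  | succ k ih =>
      rw [Finset.sum_Icc_succ_top (by omega : 1 ≤ k + 1), ih]
      push_cast; ring

lemma inner2 (n : ℕ) : (∑ j ∈ Icc 2 (n + 1), (j : ℝ)) = (n + 1) * (n + 2) / 2 - 1 := by
  induction n with
  | zero => simp
  | succ k ih =>
      rw [Finset.sum_Icc_succ_top (by omega : 2 ≤ k + 2), ih]
      push_cast; ring

lemma f_eq (n : ℕ) : (∑ i ∈ Icc 1 n, ∑ j ∈ Icc 1 i, (j : ℝ)) = n * (n + 1) * (n + 2) / 6 := by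
  induction n with
  | zero => simp
  | succ k ih =>
      rw [Finset.sum_Icc_succ_top (by omega : 1 ≤ k + 1), ih, inner1]
      push_cast; ring

lemma g_eq (n : ℕ) : (∑ i ∈ Icc 2 (n + 1), ∑ j ∈ Icc 2 i, (j : ℝ))
    = (n + 1) * n * (n + 5) / 6 := by
  induction n with
  | zero => simp
  | succ k ih =>
      rw [Finset.sum_Icc_succ_top (by omega : 2 ≤ k + 2), ih, inner2]
      push_cast; ring

/-- Critical fixation time rate on the cycle at `r = 1`, `p_c = 1/2` equals
`N(N+1)/((N-2)(N+3))`, where `w_j = N` and `Φ_j = j/N`. -/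
theorem cycle_critical_fixation_rate_neutral (N : ℕ) (hN : 3 ≤ N) :
    (∑ i ∈ Icc 1 (N - 1), ∑ j ∈ Icc 1 i, (N : ℝ) * ((j : ℝ) / N)) /
        (((∑ i ∈ Icc 2 (N - 1), ∑ j ∈ Icc 2 i, (N : ℝ) * (((j : ℝ) / N) / ((1 : ℝ) / N))) +
            (2 * (N : ℝ) - (N : ℝ) * (((2 : ℝ) / N) / ((1 : ℝ) / N))) * ((N : ℝ) - 1) /
              (1 + 2 * (1 / 2))) /
          (1 + (2 / (1 + 1)) * ((N : ℝ) - 1))) =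
      (N : ℝ) * ((N : ℝ) + 1) / (((N : ℝ) - 2) * ((N : ℝ) + 3)) := by
  obtain ⟨m, rfl⟩ : ∃ m, N = m + 3 := ⟨N - 3, by omega⟩
  have hm : (m : ℝ) + 3 ≠ 0 := by positivity
  have h1 : m + 3 - 1 = m + 2 := by omega
  rw [h1]
  have e1 : (∑ i ∈ Icc 1 (m + 2), ∑ j ∈ Icc 1 i, ((m + 3 : ℕ) : ℝ) * ((j : ℝ) / (m + 3 : ℕ)))
      = ∑ i ∈ Icc 1 (m + 2), ∑ j ∈ Icc 1 i, (j : ℝ) := by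
    refine Finset.sum_congr rfl fun i _ => Finset.sum_congr rfl fun j _ => ?_
    push_cast
    field_simp
  have e2 : (∑ i ∈ Icc 2 (m + 2), ∑ j ∈ Icc 2 i,
        ((m + 3 : ℕ) : ℝ) * (((j : ℝ) / (m + 3 : ℕ)) / ((1 : ℝ) / (m + 3 : ℕ))))
      = (m + 3 : ℝ) * ∑ i ∈ Icc 2 (m + 2), ∑ j ∈ Icc 2 i, (j : ℝ) := by
    rw [Finset.mul_sum]
    refine Finset.sum_congr rfl fun i _ => ?_
    rw [Finset.mul_sum]
    refine Finset.sum_congr rfl fun j _ => ?_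
    push_cast
    field_simp
  rw [e1, e2, f_eq, g_eq]
  have e3 : (2 * ((m + 3 : ℕ) : ℝ) - ((m + 3 : ℕ) : ℝ) * (((2 : ℝ) / (m + 3 : ℕ)) / ((1 : ℝ) / (m + 3 : ℕ)))) = 0 := by
    push_cast
    field_simp
    ring
  rw [e3]
  push_cast
  have ha : (m : ℝ) + 1 ≠ 0 := by positivity
  have hb : (m : ℝ) + 6 ≠ 0 := by positivity
  norm_num
  have e4 : ((m : ℝ) + 3) * (((m : ℝ) + 1 + 1) * ((m : ℝ) + 1) * ((m : ℝ) + 1 + 5) / 6) / ((m : ℝ) + 3)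
      = ((m : ℝ) + 2) * ((m : ℝ) + 1) * ((m : ℝ) + 6) / 6 := by
    field_simp; ring
  rw [e4]
  have hr : ((m : ℝ) + 3 - 2) * ((m : ℝ) + 3 + 3) ≠ 0 := by
    have h : ((m : ℝ) + 3 - 2) * ((m : ℝ) + 3 + 3) = ((m : ℝ) + 1) * ((m : ℝ) + 6) := by ring
    rw [h]; positivity
  rw [div_eq_div_iff (by positivity) hr]
  ring
end

section
/- For the cycle graph of order N, the limit as r → +∞ of the critical absorption time rate equals 2N(N-1)/((N+1)(N-2)): specifically, lim_{r→∞} [Σ_{i=1}^{N-1} Σ_{j=1}^i (1/r)^{i-j+1}(rj+N-j)] / [Σ_{i=2}^{N-1} Σ_{j=2}^i (1/(2r p_c))^{i-j+1}(rj+N-j) + (N/2)Σ_{i=1}^{N-1}(1/r)^i] = 2N(N-1)/((N+1)(N-2)), where p_c = p_c(r) satisfies (2/(1+2rp_c))Σ_{i=0}^{N-2}(1/(2rp_c))^i = Σ_{i=1}^{N-1}(1/r)^i and p_c(r) → 1 as r → ∞. -/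
open Finset Filter

private lemma inv_tendsto' : Tendsto (fun r : ℝ => 1/r) atTop (nhds 0) := by
  simpa [one_div] using (tendsto_inv_atTop_zero : Tendsto (fun r : ℝ => r⁻¹) atTop (nhds 0))

private lemma aux0 (k : ℕ) (hk : 1 ≤ k) :
    Tendsto (fun r : ℝ => (1/r)^k) atTop (nhds 0) := by
  simpa [zero_pow (by omega : k ≠ 0)] using inv_tendsto'.pow k

private lemma aux1 (k : ℕ) (a b : ℝ) :
    Tendsto (fun r : ℝ => (1/r)^(k+1) * (r*a + b)) atTop
      (nhds (if k = 0 then a else 0)) := by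
  have hk : Tendsto (fun r : ℝ => (1/r)^k * (a + b * (1/r))) atTop
      (nhds ((0:ℝ)^k * (a + b*0))) :=
    (inv_tendsto'.pow k).mul (tendsto_const_nhds.add (tendsto_const_nhds.mul inv_tendsto'))
  have hval : (0:ℝ)^k * (a + b*0) = if k = 0 then a else 0 := by
    cases k <;> simp
  rw [hval] at hk
  refine Tendsto.congr' ?_ hk
  filter_upwards [eventually_gt_atTop (0:ℝ)] with r hr
  have h1 : r ≠ 0 := ne_of_gt hr
  have e : (1/r) * r = 1 := one_div_mul_cancel h1
  linear_combination (-(1/r)^k*a) * e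

private lemma aux2 (pc : ℝ → ℝ) (hpc1 : Tendsto pc atTop (nhds 1)) (k : ℕ) (a b : ℝ) :
    Tendsto (fun r : ℝ => (1/(2*r*pc r))^(k+1) * (r*a + b)) atTop
      (nhds (if k = 0 then a/2 else 0)) := by
  have h2 : Tendsto (fun r : ℝ => (1/(2*pc r))^(k+1)) atTop (nhds ((1/2:ℝ)^(k+1))) := by
    have hm : Tendsto (fun r : ℝ => 2 * pc r) atTop (nhds 2) := by
      simpa using hpc1.const_mul (2:ℝ)
    have : Tendsto (fun r : ℝ => (2 * pc r)⁻¹) atTop (nhds (2⁻¹)) :=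
      hm.inv₀ (by norm_num)
    simpa [one_div] using this.pow (k+1)
  have hmul := h2.mul (aux1 k a b)
  have hval : (1/2:ℝ)^(k+1) * (if k = 0 then a else 0) = if k = 0 then a/2 else 0 := by
    cases k with
    | zero => simp; ring
    | succ n => simp
  rw [hval] at hmul
  refine Tendsto.congr' ?_ hmul
  filter_upwards [eventually_gt_atTop (0:ℝ),
    hpc1.eventually (eventually_gt_nhds (by norm_num : (1/2:ℝ) < 1))] with r hr hpr
  have h1 : r ≠ 0 := ne_of_gt hr
  have h3 : pc r ≠ 0 := by positivity
  have hbase : (1/(2*pc r)) * (1/r) = 1/(2*r*pc r) := by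
    field_simp
  rw [← hbase, mul_pow, mul_assoc]

private lemma sumIcc' (m : ℕ) : ∑ i ∈ Icc 1 m, (i:ℝ) = m*(m+1)/2 := by
  induction m with
  | zero => simp
  | succ n ih =>
      rw [Finset.sum_Icc_succ_top (by omega)]
      rw [ih]; push_cast; ring

/-- For the cycle graph of order `N`, the critical absorption time rate tends to
`2N(N-1)/((N+1)(N-2))` as `r → +∞`, where `p_c(r)` is the critical proliferation
parameter, characterized by the displayed equation and tending to `1`. -/
theorem cycle_critical_absorption_rate_limit (N : ℕ) (hN : 4 ≤ N)
    (pc : ℝ → ℝ)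
    (hpc : ∀ r : ℝ, 1 < r →
      (2 / (1 + 2 * r * pc r)) * ∑ i ∈ range (N - 1), (1 / (2 * r * pc r)) ^ i =
        ∑ i ∈ Icc 1 (N - 1), (1 / r) ^ i)
    (hpc1 : Tendsto pc atTop (nhds 1)) :
    Tendsto
      (fun r : ℝ =>
        (∑ i ∈ Icc 1 (N - 1), ∑ j ∈ Icc 1 i, (1 / r) ^ (i - j + 1) * (r * j + N - j)) /
          ((∑ i ∈ Icc 2 (N - 1), ∑ j ∈ Icc 2 i,
              (1 / (2 * r * pc r)) ^ (i - j + 1) * (r * j + N - j)) +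
            ((N : ℝ) / 2) * ∑ i ∈ Icc 1 (N - 1), (1 / r) ^ i))
      atTop
      (nhds (2 * (N : ℝ) * ((N : ℝ) - 1) / (((N : ℝ) + 1) * ((N : ℝ) - 2)))) := by
  have hNR : (4:ℝ) ≤ (N:ℝ) := by exact_mod_cast hN
  -- numerator limit
  have hnum : Tendsto
      (fun r : ℝ => ∑ i ∈ Icc 1 (N - 1), ∑ j ∈ Icc 1 i, (1 / r) ^ (i - j + 1) * (r * j + N - j))
      atTop (nhds (∑ i ∈ Icc 1 (N - 1), (i:ℝ))) := by
    refine tendsto_finset_sum _ (fun i hi => ?_)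
    obtain ⟨hi1, hi2⟩ := mem_Icc.mp hi
    have hrw : (i:ℝ) = ∑ j ∈ Icc 1 i, (if j = i then (j:ℝ) else 0) := by
      rw [Finset.sum_ite_eq' (Icc 1 i) i (fun j => (j:ℝ))]
      simp [mem_Icc, hi1]
    rw [hrw]
    refine tendsto_finset_sum _ (fun j hj => ?_)
    obtain ⟨hj1, hj2⟩ := mem_Icc.mp hj
    by_cases hij : j = i
    · subst hij
      have := aux1 0 (j:ℝ) ((N:ℝ) - (j:ℝ))
      rw [if_pos rfl] at this
      rw [if_pos rfl]
      refine this.congr fun r => ?_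
      simp only [Nat.sub_self]
      ring
    · have := aux1 (i - j) (j:ℝ) ((N:ℝ) - (j:ℝ))
      rw [if_neg (by omega)] at this
      rw [if_neg hij]
      refine this.congr fun r => ?_
      ring
  -- denominator part 1 limit
  have hden1 : Tendsto
      (fun r : ℝ => ∑ i ∈ Icc 2 (N - 1), ∑ j ∈ Icc 2 i,
        (1 / (2 * r * pc r)) ^ (i - j + 1) * (r * j + N - j))
      atTop (nhds (∑ i ∈ Icc 2 (N - 1), (i:ℝ)/2)) := by
    refine tendsto_finset_sum _ (fun i hi => ?_)
    obtain ⟨hi1, hi2⟩ := mem_Icc.mp hi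
    have hrw : (i:ℝ)/2 = ∑ j ∈ Icc 2 i, (if j = i then (j:ℝ)/2 else 0) := by
      rw [Finset.sum_ite_eq' (Icc 2 i) i (fun j => (j:ℝ)/2)]
      simp [mem_Icc, hi1]
    rw [hrw]
    refine tendsto_finset_sum _ (fun j hj => ?_)
    obtain ⟨hj1, hj2⟩ := mem_Icc.mp hj
    by_cases hij : j = i
    · subst hij
      have := aux2 pc hpc1 0 (j:ℝ) ((N:ℝ) - (j:ℝ))
      rw [if_pos rfl] at this
      rw [if_pos rfl]
      refine this.congr fun r => ?_
      simp only [Nat.sub_self]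
      ring
    · have := aux2 pc hpc1 (i - j) (j:ℝ) ((N:ℝ) - (j:ℝ))
      rw [if_neg (by omega)] at this
      rw [if_neg hij]
      refine this.congr fun r => ?_
      ring
  -- denominator part 2 limit
  have hden2 : Tendsto
      (fun r : ℝ => ((N:ℝ)/2) * ∑ i ∈ Icc 1 (N - 1), (1/r)^i) atTop (nhds 0) := by
    have h := tendsto_finset_sum (Icc 1 (N-1))
      (fun i hi => aux0 i (mem_Icc.mp hi).1)
    simpa using h.const_mul ((N:ℝ)/2)
  have hden := hden1.add hden2
  -- closed forms
  have hA : ∑ i ∈ Icc 1 (N - 1), (i:ℝ) = (N:ℝ)*((N:ℝ)-1)/2 := by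
    rw [sumIcc' (N-1), Nat.cast_sub (by omega : 1 ≤ N)]
    push_cast
    ring
  have hB : ∑ i ∈ Icc 2 (N - 1), (i:ℝ)/2 = ((N:ℝ)*((N:ℝ)-1)/2 - 1)/2 := by
    have h1 : (Icc 2 (N-1) : Finset ℕ) = Ioc 1 (N-1) := Finset.Icc_add_one_left_eq_Ioc 1 (N-1)
    have h2 : (Icc 1 (N-1) : Finset ℕ) = Finset.cons 1 (Ioc 1 (N-1)) (by simp) :=
      Finset.Icc_eq_cons_Ioc (by omega)
    have h3 : ∑ i ∈ Ioc 1 (N-1), (i:ℝ) = (N:ℝ)*((N:ℝ)-1)/2 - 1 := by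
      have := hA
      rw [h2, Finset.sum_cons] at this
      push_cast at this ⊢
      linarith
    rw [h1, ← Finset.sum_div, h3]
  rw [hB] at hden
  have hDpos : (0:ℝ) < ((N:ℝ)*((N:ℝ)-1)/2 - 1)/2 + 0 := by nlinarith
  have hfin := hnum.div hden (ne_of_gt hDpos)
  have hval : (∑ i ∈ Icc 1 (N - 1), (i:ℝ)) / (((N:ℝ)*((N:ℝ)-1)/2 - 1)/2 + 0)
      = 2 * (N : ℝ) * ((N : ℝ) - 1) / (((N : ℝ) + 1) * ((N : ℝ) - 2)) := by
    have h1 : ((N:ℝ)*((N:ℝ)-1)/2 - 1)/2 ≠ 0 := ne_of_gt (by nlinarith)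
    have h2 : ((N : ℝ) + 1) * ((N : ℝ) - 2) ≠ 0 := by nlinarith
    rw [hA, add_zero, div_eq_div_iff h1 h2]
    ring
  rwa [hval] at hfin
end

section
/- For the Moran process on the complete graph K_N, the mean absorption time of a single mutant tends to (N-1)·H_{N-1} as r → +∞, where H_{N-1} = Σ_{k=1}^{N-1} 1/k. -/
open Finset Filter

private lemma limA (j N : ℕ) (hj : 1 ≤ j) :
    Tendsto (fun r : ℝ => (r * j + N - j) / (r * j)) atTop (nhds 1) := by
  have hj0 : (0:ℝ) < j := by exact_mod_cast hj
  have h : Tendsto (fun r : ℝ => 1 + ((N:ℝ) - j) / j * r⁻¹) atTop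
      (nhds (1 + ((N:ℝ) - j) / j * 0)) :=
    tendsto_const_nhds.add (tendsto_inv_atTop_zero.const_mul _)
  simp only [mul_zero, add_zero] at h
  refine h.congr' ?_
  filter_upwards [eventually_gt_atTop (0:ℝ)] with r hr
  have hr0 : r ≠ 0 := ne_of_gt hr
  field_simp
  ring

private lemma lim1 (m : ℕ) (hm : 1 ≤ m) :
    Tendsto (fun r : ℝ => (1 / r ^ (m - 1)) * ((r ^ m - 1) / (r - 1))) atTop (nhds 1) := by
  obtain ⟨k, rfl⟩ : ∃ k, m = k + 1 := ⟨m - 1, (Nat.succ_pred_eq_of_pos hm).symm⟩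
  have h : Tendsto (fun r : ℝ => (1 - (r ^ (k+1))⁻¹) / (1 - r⁻¹)) atTop
      (nhds ((1 - 0) / (1 - 0))) := by
    refine Tendsto.div (tendsto_const_nhds.sub ?_) (tendsto_const_nhds.sub tendsto_inv_atTop_zero)
      (by norm_num)
    exact (tendsto_pow_atTop (by omega)).inv_tendsto_atTop
  norm_num at h
  refine h.congr' ?_
  filter_upwards [eventually_gt_atTop (1:ℝ)] with r hr
  have hr0 : r ≠ 0 := by positivity
  have hr1 : r - 1 ≠ 0 := by intro h; apply absurd hr; simp [sub_eq_zero] at h; simp [h]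
  have hpm : r ^ (k+1) ≠ 0 := pow_ne_zero _ hr0
  simp only [Nat.add_sub_cancel]
  field_simp
  ring

private lemma limP (N : ℕ) (hN : 2 ≤ N) :
    Tendsto (fun r : ℝ => r ^ (N - 1) * ((r - 1) / (r ^ N - 1))) atTop (nhds 1) := by
  obtain ⟨k, rfl⟩ : ∃ k, N = k + 1 := ⟨N - 1, (Nat.succ_pred_eq_of_pos (by omega)).symm⟩
  have h : Tendsto (fun r : ℝ => (1 - r⁻¹) / (1 - (r ^ (k+1))⁻¹)) atTop
      (nhds ((1 - 0) / (1 - 0))) := by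
    refine Tendsto.div (tendsto_const_nhds.sub tendsto_inv_atTop_zero)
      (tendsto_const_nhds.sub ?_) (by norm_num)
    exact (tendsto_pow_atTop (by omega)).inv_tendsto_atTop
  norm_num at h
  refine h.congr' ?_
  filter_upwards [eventually_gt_atTop (1:ℝ)] with r hr
  have hr0 : r ≠ 0 := by positivity
  have hr1 : r - 1 ≠ 0 := by intro h; apply absurd hr; simp [sub_eq_zero] at h; simp [h]
  have hpm : r ^ (k+1) - 1 ≠ 0 := by
    have : 1 < r ^ (k+1) := one_lt_pow₀ hr (by omega)
    intro h; rw [sub_eq_zero] at h; simp [h] at this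
  simp only [Nat.add_sub_cancel]
  field_simp
  ring

/-- The Moran mean absorption time of a single mutant on the complete graph
`K_N` tends to `(N-1) H_{N-1}` as `r → +∞`. -/
theorem complete_moran_absorption_time_limit (N : ℕ) (hN : 2 ≤ N) :
    Tendsto
      (fun r : ℝ =>
        r ^ (N - 1) * ((r - 1) / (r ^ N - 1)) *
          ∑ j ∈ Icc 1 (N - 1),
            ((r * j + N - j) / (r * j)) * (((N : ℝ) - 1) / ((N : ℝ) - j)) *
              (1 / r ^ (N - j - 1)) * ((r ^ (N - j) - 1) / (r - 1)))
      atTop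
      (nhds (((N : ℝ) - 1) * ∑ k ∈ Icc 1 (N - 1), 1 / (k : ℝ))) := by
  have key : ∀ j ∈ Icc 1 (N - 1),
      Tendsto (fun r : ℝ =>
        ((r * j + N - j) / (r * j)) * (((N : ℝ) - 1) / ((N : ℝ) - j)) *
          (1 / r ^ (N - j - 1)) * ((r ^ (N - j) - 1) / (r - 1))) atTop
        (nhds (((N : ℝ) - 1) / ((N : ℝ) - j))) := by
    intro j hj
    rw [mem_Icc] at hj
    have h := ((limA j N hj.1).mul
        (tendsto_const_nhds (x := ((N : ℝ) - 1) / ((N : ℝ) - j)))).mul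
        (lim1 (N - j) (by omega))
    simp only [one_mul, mul_one] at h
    refine h.congr fun r => ?_
    ring
  have hsum := tendsto_finset_sum _ key
  have h := (limP N hN).mul hsum
  rw [one_mul] at h
  have heq : (∑ j ∈ Icc 1 (N - 1), ((N : ℝ) - 1) / ((N : ℝ) - j))
      = ((N : ℝ) - 1) * ∑ k ∈ Icc 1 (N - 1), 1 / (k : ℝ) := by
    rw [Finset.mul_sum]
    refine Finset.sum_nbij' (i := fun j => N - j) (j := fun k => N - k) ?_ ?_ ?_ ?_ ?_
    · intro a ha; simp only [mem_Icc] at *; omega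
    · intro a ha; simp only [mem_Icc] at *; omega
    · intro a ha; simp only [mem_Icc] at ha; omega
    · intro a ha; simp only [mem_Icc] at ha; omega
    · intro a ha
      rw [mem_Icc] at ha
      have hle : a ≤ N := by omega
      rw [Nat.cast_sub hle]
      ring
  rwa [heq] at h
end

section
/- For Bernoulli proliferation on the star graph of order N (one centre and N-1 leaves), the mean absorption time of a single mutant equals τ_1 = (1/N)·( w_1/(N-1+rp) + (N-1)^2·( rp·w_2 + (rp+N-2)·w_1 )/( (N-1)(rp)^2 + rp + N-2 ) ), where w_j = rj + N - j. In particular lim_{r→∞} τ_1 = (3N-2)/(Np). -/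
open Filter

set_option maxHeartbeats 2000000 in
/-- For Bernoulli proliferation on the star graph of order `N`, solving the
embedded jump equations gives the closed form for the mean absorption time of a
single mutant, which tends to `(3N-2)/(Np)` as `r → +∞`. Here `w j = rj + N - j`. -/
theorem star_bernoulli_absorption_time (N : ℕ) (hN : 3 ≤ N)
    (p : ℝ) (hp : 0 < p) (hp1 : p ≤ 1)
    (τ01 τ10 τ11 τ1 : ℝ → ℝ)
    (h01 : ∀ r : ℝ, 0 < r → τ01 r = (r * 1 + N - 1) / ((N : ℝ) - 1 + r * p))
    (h10 : ∀ r : ℝ, 0 < r → τ10 r =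
      (((N : ℝ) - 1) * (r * p) / (((N : ℝ) - 1) * (r * p) + 1)) * τ11 r +
        ((N : ℝ) - 1) * (r * 1 + N - 1) / (((N : ℝ) - 1) * (r * p) + 1))
    (h11 : ∀ r : ℝ, 0 < r → τ11 r =
      (((N : ℝ) - 2) / ((N : ℝ) - 2 + r * p)) * τ10 r +
        (r * 2 + N - 2) / ((N : ℝ) - 2 + r * p))
    (h1 : ∀ r : ℝ, 0 < r → τ1 r = (1 / (N : ℝ)) * (τ01 r + ((N : ℝ) - 1) * τ10 r)) :
    (∀ r : ℝ, 0 < r →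
      τ1 r = (1 / (N : ℝ)) *
        ((r * 1 + N - 1) / ((N : ℝ) - 1 + r * p) +
          ((N : ℝ) - 1) ^ 2 *
            ((r * p) * (r * 2 + N - 2) + (r * p + N - 2) * (r * 1 + N - 1)) /
              (((N : ℝ) - 1) * (r * p) ^ 2 + r * p + N - 2))) ∧
    Tendsto τ1 atTop (nhds ((3 * (N : ℝ) - 2) / ((N : ℝ) * p))) := by
  have h3 : (3:ℝ) ≤ (N:ℝ) := by exact_mod_cast hN
  have hNpos : (0:ℝ) < (N:ℝ) := by linarith
  have closed : ∀ r : ℝ, 0 < r →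
      τ1 r = (1 / (N : ℝ)) *
        ((r * 1 + N - 1) / ((N : ℝ) - 1 + r * p) +
          ((N : ℝ) - 1) ^ 2 *
            ((r * p) * (r * 2 + N - 2) + (r * p + N - 2) * (r * 1 + N - 1)) /
              (((N : ℝ) - 1) * (r * p) ^ 2 + r * p + N - 2)) := by
    intro r hr
    have hrp : 0 < r * p := mul_pos hr hp
    have hB : (0:ℝ) < ((N : ℝ) - 1) * (r * p) + 1 := by nlinarith
    have hC : (0:ℝ) < (N : ℝ) - 2 + r * p := by nlinarith
    have hD : (0:ℝ) < ((N : ℝ) - 1) * (r * p) ^ 2 + r * p + N - 2 := by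
      nlinarith [sq_nonneg (r*p)]
    have e10 := h10 r hr
    rw [h11 r hr] at e10
    have E : τ10 r * ((((N : ℝ) - 1) * (r * p) + 1) * ((N:ℝ) - 2 + r * p)) =
        ((N:ℝ)-1) * (r*p) * (((N:ℝ)-2) * τ10 r + (r*2 + N - 2)) +
          ((N:ℝ)-1)*(r*1+N-1)*((N:ℝ)-2+r*p) := by
      apply mul_right_cancel₀ (ne_of_gt hB)
      have hB' : ((N:ℝ) - 1) * r * p + 1 ≠ 0 := by nlinarith
      field_simp at e10
      linear_combination (((N:ℝ) - 1) * (r * p) + 1) * e10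
    have hx : τ10 r = ((N:ℝ)-1) *
        ((r * p) * (r * 2 + N - 2) + (r * p + N - 2) * (r * 1 + N - 1)) /
        (((N : ℝ) - 1) * (r * p) ^ 2 + r * p + N - 2) := by
      rw [eq_div_iff hD.ne']
      linear_combination E
    rw [h1 r hr, h01 r hr, hx]
    ring
  refine ⟨closed, ?_⟩
  set g : ℝ → ℝ := fun x => (1/(N:ℝ)) *
      ((1 + ((N:ℝ)-1)*x)/(((N:ℝ)-1)*x + p) +
        ((N:ℝ)-1)^2 * (p*(2+((N:ℝ)-2)*x) + (p+((N:ℝ)-2)*x)*(1+((N:ℝ)-1)*x)) /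
          (((N:ℝ)-1)*p^2 + p*x + ((N:ℝ)-2)*x^2)) with hg
  have hg0 : g 0 = (3 * (N : ℝ) - 2) / ((N : ℝ) * p) := by
    have h1' : ((N:ℝ)-1) ≠ 0 := by linarith
    simp only [hg]
    have hp0 : p ≠ 0 := hp.ne'
    simp only [mul_zero, zero_mul, add_zero, zero_add, mul_one, ne_eq, OfNat.ofNat_ne_zero, not_false_eq_true, zero_pow]
    field_simp
    ring
  have hcont : ContinuousAt g 0 := by
    apply ContinuousAt.mul continuousAt_const
    apply ContinuousAt.add
    · apply ContinuousAt.div (by fun_prop) (by fun_prop)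
      simp [hp.ne']
    · apply ContinuousAt.div (by fun_prop) (by fun_prop)
      show ((N:ℝ)-1)*p^2 + p*(0:ℝ) + ((N:ℝ)-2)*(0:ℝ)^2 ≠ 0
      intro h
      nlinarith
  have htend : Tendsto (fun r : ℝ => g r⁻¹) atTop (nhds (g 0)) :=
    hcont.tendsto.comp tendsto_inv_atTop_zero
  rw [← hg0]
  apply htend.congr'
  filter_upwards [eventually_gt_atTop 0] with r hr
  have hrne : r ≠ 0 := ne_of_gt hr
  have hrp : 0 < r * p := mul_pos hr hp
  have hA : (0:ℝ) < (N : ℝ) - 1 + r * p := by nlinarith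
  have hD : (0:ℝ) < ((N : ℝ) - 1) * (r * p) ^ 2 + r * p + N - 2 := by
    nlinarith [sq_nonneg (r*p)]
  have hA' : (0:ℝ) < ((N:ℝ)-1)*r⁻¹ + p := by
    have : 0 < r⁻¹ := inv_pos.mpr hr
    nlinarith
  have hD' : (0:ℝ) < ((N:ℝ)-1)*p^2 + p*r⁻¹ + ((N:ℝ)-2)*r⁻¹^2 := by
    have h1 : 0 < r⁻¹ := inv_pos.mpr hr
    nlinarith [sq_nonneg r⁻¹]
  have e1 : (1 + ((N:ℝ)-1)*r⁻¹)/(((N:ℝ)-1)*r⁻¹ + p) = (r * 1 + (N:ℝ) - 1)/((N:ℝ)-1 + r*p) := by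
    rw [div_eq_div_iff hA'.ne' hA.ne']
    field_simp
    ring
  have e2 : ((N:ℝ)-1)^2 * (p*(2+((N:ℝ)-2)*r⁻¹) + (p+((N:ℝ)-2)*r⁻¹)*(1+((N:ℝ)-1)*r⁻¹)) /
        (((N:ℝ)-1)*p^2 + p*r⁻¹ + ((N:ℝ)-2)*r⁻¹^2) =
      ((N:ℝ)-1)^2 * (r*p*(r*2+(N:ℝ)-2) + (r*p+(N:ℝ)-2)*(r*1+(N:ℝ)-1)) /
        (((N:ℝ)-1)*(r*p)^2 + r*p + (N:ℝ)-2) := by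
    rw [div_eq_div_iff hD'.ne' hD.ne']
    field_simp
    ring
  rw [closed r hr]
  simp only [hg]
  rw [e1, e2]
end
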